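/- Let d ≥ 1, N a seminorm on ℝ^d, C = {s ∈ ℝ^d : N(s) = 1}, and let γ be a Borel measure on ℝ^d concentrated on C such that for every u ∈ ℝ^d one has ∫_C |⟨u,s⟩| · |log|⟨u,s⟩|| dγ(s) < ∞. Then for every M > 0, γ({s ∈ C : ‖s‖₂ ≤ M}) < ∞. -/

import Mathlib

open MeasureTheory
open scoped RealInnerProductSpace

noncomputable def myf : ℝ → ℝ := fun x => |x| * |(Real.log |x|)|

lemma myf_eq (x : ℝ) : myf x = abs (abs x * Real.log (abs x)) := by
  rw [abs_mul, abs_abs]; rfl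

lemma myf_cont : Continuous myf := by
  have h : myf = fun x : ℝ => abs (abs x * Real.log (abs x)) := funext myf_eq
  rw [h]
  exact continuous_abs.comp (Real.continuous_mul_log.comp continuous_abs)

lemma myf_nonneg (x : ℝ) : 0 ≤ myf x := by
  unfold myf; positivity

lemma myf_pos {x : ℝ} (hx : x ≠ 0) (hx1 : |x| ≠ 1) : 0 < myf x := by
  unfold myf
  apply mul_pos (abs_pos.mpr hx)
  rw [abs_pos]
  intro h
  rcases Real.log_eq_zero.mp h with h' | h' | h'
  · exact hx (abs_eq_zero.mp h')
  · exact hx1 h'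
  · linarith [abs_nonneg x]

noncomputable def myg : ℝ → ℝ := fun x => myf x + myf (2 * x)

lemma myg_nonneg (x : ℝ) : 0 ≤ myg x := add_nonneg (myf_nonneg _) (myf_nonneg _)

lemma myg_pos {x : ℝ} (hx : x ≠ 0) : 0 < myg x := by
  by_cases h1 : |x| = 1
  · have h2 : |2 * x| = 2 := by rw [abs_mul, h1]; norm_num
    have h3 : 0 < myf (2 * x) := myf_pos (mul_ne_zero two_ne_zero hx) (by rw [h2]; norm_num)
    have h4 := myf_nonneg x
    unfold myg; linarith
  · have h3 : 0 < myf x := myf_pos hx h1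
    have h4 := myf_nonneg (2 * x)
    unfold myg; linarith

noncomputable def myG (d : ℕ) : EuclideanSpace ℝ (Fin d) → ℝ := fun s => ∑ i, myg (s i)

lemma myG_cont {d : ℕ} : Continuous (myG d) := by
  apply continuous_finset_sum
  intro i _
  exact (myf_cont.comp ((EuclideanSpace.proj (𝕜 := ℝ) i).continuous)).add
    (myf_cont.comp ((continuous_const.mul (EuclideanSpace.proj (𝕜 := ℝ) i).continuous)))

lemma myG_pos {d : ℕ} {s : EuclideanSpace ℝ (Fin d)} (hs : s ≠ 0) : 0 < myG d s := by
  have : ∃ i, s i ≠ 0 := by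
    by_contra h
    push_neg at h
    exact hs (by ext i; exact h i)
  obtain ⟨i, hi⟩ := this
  exact Finset.sum_pos' (fun j _ => myg_nonneg _) ⟨i, Finset.mem_univ i, myg_pos hi⟩

lemma seminorm_sum_le {d : ℕ} (p : Seminorm ℝ (EuclideanSpace ℝ (Fin d))) {ι : Type*} (s : Finset ι)
    (f : ι → EuclideanSpace ℝ (Fin d)) : p (∑ i ∈ s, f i) ≤ ∑ i ∈ s, p (f i) := by
  classical
  induction s using Finset.induction with
  | empty => simp
  | @insert a s h ih =>
    rw [Finset.sum_insert h, Finset.sum_insert h]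
    exact (map_add_le_add p _ _).trans (by gcongr)

lemma abs_apply_le_norm {d : ℕ} (s : EuclideanSpace ℝ (Fin d)) (i : Fin d) : |s i| ≤ ‖s‖ := by
  have h := abs_real_inner_le_norm (EuclideanSpace.single i (1 : ℝ)) s
  rw [EuclideanSpace.inner_single_left, EuclideanSpace.norm_single] at h
  simpa using h

lemma eq_sum_single {d : ℕ} (s : EuclideanSpace ℝ (Fin d)) :
    s = ∑ i, s i • EuclideanSpace.single i (1 : ℝ) := by
  have h := (EuclideanSpace.basisFun (Fin d) ℝ).sum_repr s
  simp only [EuclideanSpace.basisFun_apply, EuclideanSpace.basisFun_repr] at h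
  exact h.symm

theorem stmt4 (d : ℕ) (hd : 1 ≤ d)
    (N : Seminorm ℝ (EuclideanSpace ℝ (Fin d)))
    (C : Set (EuclideanSpace ℝ (Fin d)))
    (hC : C = {s : EuclideanSpace ℝ (Fin d) | N s = 1})
    (γ : Measure (EuclideanSpace ℝ (Fin d))) (hγC : γ Cᶜ = 0)
    (hint : ∀ u : EuclideanSpace ℝ (Fin d),
      ∫⁻ s in C, ENNReal.ofReal (|⟪u, s⟫| * |(Real.log |⟪u, s⟫|)|) ∂γ < ⊤) :
    ∀ M : ℝ, 0 < M → γ {s | s ∈ C ∧ ‖s‖ ≤ M} < ⊤ := by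
  intro M hM
  set c : ℝ := ∑ i, N (EuclideanSpace.single i (1 : ℝ)) with hc
  have hc0 : 0 ≤ c := Finset.sum_nonneg fun i _ => apply_nonneg N _
  have hNle : ∀ s : EuclideanSpace ℝ (Fin d), N s ≤ (c + 1) * ‖s‖ := by
    intro s
    calc N s = N (∑ i, s i • EuclideanSpace.single i (1 : ℝ)) := by rw [← eq_sum_single]
    _ ≤ ∑ i, N (s i • EuclideanSpace.single i (1 : ℝ)) := seminorm_sum_le N _ _
    _ = ∑ i, |s i| * N (EuclideanSpace.single i (1 : ℝ)) := by
        simp [map_smul_eq_mul, Real.norm_eq_abs]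
    _ ≤ ∑ i, ‖s‖ * N (EuclideanSpace.single i (1 : ℝ)) := by
        apply Finset.sum_le_sum
        intro i _
        exact mul_le_mul_of_nonneg_right (abs_apply_le_norm s i) (apply_nonneg N _)
    _ = c * ‖s‖ := by rw [← Finset.mul_sum, mul_comm]
    _ ≤ (c + 1) * ‖s‖ := by nlinarith [norm_nonneg s]
  have hNcont : Continuous N := by
    apply (LipschitzWith.of_dist_le_mul (K := ⟨c + 1, by linarith⟩) ?_).continuous
    intro x y
    calc dist (N x) (N y) = ‖N x - N y‖ := by rw [Real.dist_eq]; rfl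
    _ ≤ N (x - y) := N.norm_sub_map_le_sub x y
    _ ≤ (c + 1) * ‖x - y‖ := hNle _
    _ = (↑(⟨c + 1, by linarith⟩ : NNReal) : ℝ) * dist x y := by rw [dist_eq_norm]
  have hCmeas : MeasurableSet C := by
    rw [hC]
    exact hNcont.measurable (measurableSet_singleton 1)
  set S : Set (EuclideanSpace ℝ (Fin d)) := {s | s ∈ C ∧ ‖s‖ ≤ M} with hS
  have hSmeas : MeasurableSet S :=
    hCmeas.inter (measurableSet_le measurable_norm measurable_const)
  have hSsub : S ⊆ C := fun s hs => hs.1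
  set r : ℝ := 1 / (c + 1) with hr
  have hrpos : 0 < r := by positivity
  have hCr : ∀ s ∈ C, r ≤ ‖s‖ := by
    intro s hs
    rw [hC] at hs
    have hs' : N s = 1 := hs
    have h1 : (1 : ℝ) ≤ (c + 1) * ‖s‖ := hs' ▸ hNle s
    rw [hr, div_le_iff₀ (by linarith)]
    linarith
  have hI : ∫⁻ s in C, ENNReal.ofReal (myG d s) ∂γ < ⊤ := by
    have key : ∀ s : EuclideanSpace ℝ (Fin d), ENNReal.ofReal (myG d s) =
        ∑ i, (ENNReal.ofReal (myf (s i)) + ENNReal.ofReal (myf (2 * s i))) := by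
      intro s
      rw [myG, ENNReal.ofReal_sum_of_nonneg (fun i _ => myg_nonneg _)]
      congr 1
      ext i
      rw [myg, ENNReal.ofReal_add (myf_nonneg _) (myf_nonneg _)]
    calc ∫⁻ s in C, ENNReal.ofReal (myG d s) ∂γ
        = ∫⁻ s in C, ∑ i, (ENNReal.ofReal (myf (s i)) + ENNReal.ofReal (myf (2 * s i))) ∂γ := by
          simp_rw [key]
      _ = ∑ i, ∫⁻ s in C, (ENNReal.ofReal (myf (s i)) + ENNReal.ofReal (myf (2 * s i))) ∂γ := by
          apply lintegral_finset_sum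
          intro i _
          refine Measurable.add (f := fun a : EuclideanSpace ℝ (Fin d) => ENNReal.ofReal (myf (a i)))
            (g := fun a : EuclideanSpace ℝ (Fin d) => ENNReal.ofReal (myf (2 * a i))) ?_ ?_
          · exact Measurable.ennreal_ofReal
              (myf_cont.comp ((EuclideanSpace.proj (𝕜 := ℝ) i).continuous)).measurable
          · exact Measurable.ennreal_ofReal
              (myf_cont.comp (continuous_const.mul
                (EuclideanSpace.proj (𝕜 := ℝ) i).continuous)).measurable
      _ < ⊤ := by
          apply ENNReal.sum_lt_top.mpr
          intro i _
          have hm1 : Measurable fun s : EuclideanSpace ℝ (Fin d) =>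
              ENNReal.ofReal (myf (s i)) := by
            apply Measurable.ennreal_ofReal
            exact (myf_cont.comp ((EuclideanSpace.proj (𝕜 := ℝ) i).continuous)).measurable
          rw [lintegral_add_left hm1]
          apply ENNReal.add_lt_top.mpr
          constructor
          · have h := hint (EuclideanSpace.single i (1 : ℝ))
            have heq : ∀ s : EuclideanSpace ℝ (Fin d),
                |⟪EuclideanSpace.single i (1:ℝ), s⟫| *
                |(Real.log |⟪EuclideanSpace.single i (1:ℝ), s⟫|)| = myf (s i) := by
              intro s
              rw [EuclideanSpace.inner_single_left]
              simp [myf]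
            simpa only [heq] using h
          · have h := hint (EuclideanSpace.single i (2 : ℝ))
            have heq : ∀ s : EuclideanSpace ℝ (Fin d),
                |⟪EuclideanSpace.single i (2:ℝ), s⟫| *
                |(Real.log |⟪EuclideanSpace.single i (2:ℝ), s⟫|)| = myf (2 * s i) := by
              intro s
              rw [EuclideanSpace.inner_single_left]
              simp [myf]
            simpa only [heq] using h
  set K : Set (EuclideanSpace ℝ (Fin d)) :=
    Metric.closedBall 0 M ∩ {s : EuclideanSpace ℝ (Fin d) | r ≤ ‖s‖} with hK
  have hKcompact : IsCompact K :=
    (isCompact_closedBall 0 M).inter_right (isClosed_le continuous_const continuous_norm)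
  have hSK : S ⊆ K := by
    intro s hs
    exact ⟨Metric.mem_closedBall.mpr (by rw [dist_zero_right]; exact hs.2), hCr s hs.1⟩
  rcases Set.eq_empty_or_nonempty S with hSe | hSne
  · rw [hSe]; simp
  · obtain ⟨s₀, hs₀⟩ := hSne
    obtain ⟨x, hxK, hxmin⟩ := hKcompact.exists_isMinOn ⟨s₀, hSK hs₀⟩ myG_cont.continuousOn
    have hxne : x ≠ 0 := by
      intro h
      have h2 := hxK.2
      rw [h] at h2
      simp only [Set.mem_setOf_eq, norm_zero] at h2
      linarith
    have hεpos : 0 < myG d x := myG_pos hxne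
    have hlow : ∀ s ∈ S, myG d x ≤ myG d s := fun s hs => hxmin (hSK hs)
    have h1 : ENNReal.ofReal (myG d x) * γ S ≤ ∫⁻ s in S, ENNReal.ofReal (myG d s) ∂γ := by
      rw [← setLIntegral_const S (ENNReal.ofReal (myG d x))]
      apply setLIntegral_mono' hSmeas
      intro s hs
      exact ENNReal.ofReal_le_ofReal (hlow s hs)
    have h2 : ∫⁻ s in S, ENNReal.ofReal (myG d s) ∂γ ≤
        ∫⁻ s in C, ENNReal.ofReal (myG d s) ∂γ := lintegral_mono_set hSsub
    have h3 : ENNReal.ofReal (myG d x) * γ S < ⊤ := lt_of_le_of_lt (h1.trans h2) hI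
    have h4 : γ S < ⊤ := by
      by_contra htop
      push_neg at htop
      rw [top_le_iff] at htop
      rw [htop, ENNReal.mul_top (by simp [hεpos])] at h3
      exact lt_irrefl _ h3
    exact h4
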